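/- The coproduct formula is consistent for the element {x,y}_{2,1}: applying delta_2 tensor id to delta{x,y}_{2,1} = {(1-y)/(1-x)}_2 tensor (y/x) + {y/x}_2 tensor ((1-y)/(1-x)) + {x}_2 tensor (1-y^{-1}) + {y}_2 tensor (1-x^{-1}), where delta_2{z}_2 = (1-z) wedge z, and then antisymmetrizing the first two tensor factors, yields zero in Lambda^3 of F* tensor Q; that is, the composition B2 tensor F* -> Lambda^3 F* applied to delta{x,y}_{2,1} vanishes for all x,y in F* \ {1} with x != y. -/

import Mathlib

/-- Consistency of the coproduct of `{x,y}_{2,1}`: applying `δ₂ ⊗ id` (with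
`δ₂{z}₂ = (1-z) ∧ z`) to the four-term coproduct formula yields zero in
`Λ³(F^×)⊗ℚ`, modeled by an arbitrary alternating trimultiplicative map `t`
into a `ℚ`-vector space. -/
theorem stmt_12 {F : Type*} [Field F] {M : Type*} [AddCommGroup M] [Module ℚ M]
    (t : F → F → F → M)
    (hmul₁ : ∀ a b c d : F, a ≠ 0 → b ≠ 0 → c ≠ 0 → d ≠ 0 →
      t (a * b) c d = t a c d + t b c d)
    (hmul₂ : ∀ a b c d : F, a ≠ 0 → b ≠ 0 → c ≠ 0 → d ≠ 0 →
      t a (b * c) d = t a b d + t a c d)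
    (hmul₃ : ∀ a b c d : F, a ≠ 0 → b ≠ 0 → c ≠ 0 → d ≠ 0 →
      t a b (c * d) = t a b c + t a b d)
    (halt₁ : ∀ a b c : F, t a b c = - t b a c)
    (halt₂ : ∀ a b c : F, t a b c = - t a c b)
    (x y : F) (hx0 : x ≠ 0) (hx1 : x ≠ 1) (hy0 : y ≠ 0) (hy1 : y ≠ 1)
    (hxy : x ≠ y) :
    t (1 - (1 - y) / (1 - x)) ((1 - y) / (1 - x)) (y / x)
    + t (1 - y / x) (y / x) ((1 - y) / (1 - x))
    + t (1 - x) x (1 - y⁻¹)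
    + t (1 - y) y (1 - x⁻¹)
    = 0 := by
  have hp : (1 : F) - x ≠ 0 := sub_ne_zero.mpr (Ne.symm hx1)
  have hq : (1 : F) - y ≠ 0 := sub_ne_zero.mpr (Ne.symm hy1)
  have hr : y - x ≠ 0 := sub_ne_zero.mpr (Ne.symm hxy)
  have hcyc : ∀ a b c : F, t a b c = t c a b := fun a b c =>
    (halt₂ a b c).trans (halt₁ c a b).symm
  have haa : ∀ a c : F, t a a c = 0 := by
    intro a c
    have h := halt₁ a a c
    have h2 : (2 : ℚ) • t a a c = 0 := by
      rw [two_smul]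
      nth_rewrite 2 [h]
      simp
    exact (smul_eq_zero.mp h2).resolve_left two_ne_zero
  have ht1 : ∀ b c : F, b ≠ 0 → c ≠ 0 → t 1 b c = 0 := by
    intro b c hb hc
    have h := hmul₁ 1 1 b c one_ne_zero one_ne_zero hb hc
    rw [one_mul] at h
    exact left_eq_add.mp h
  have hneg₁ : ∀ a b c : F, a ≠ 0 → b ≠ 0 → c ≠ 0 → t (-a) b c = t a b c := by
    intro a b c ha hb hc
    have h := hmul₁ (-1) a b c (by norm_num) ha hb hc
    have h1 := hmul₁ (-1) (-1) b c (by norm_num) (by norm_num) hb hc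
    rw [show (-1 : F) * (-1) = 1 by ring, ht1 b c hb hc] at h1
    have h2 : (2 : ℚ) • t (-1 : F) b c = 0 := by
      rw [two_smul]; exact h1.symm
    have h3 : t (-1 : F) b c = 0 :=
      (smul_eq_zero.mp h2).resolve_left two_ne_zero
    rw [neg_one_mul] at h
    rw [h, h3, zero_add]
  have hneg₃ : ∀ a b c : F, a ≠ 0 → b ≠ 0 → c ≠ 0 → t a b (-c) = t a b c := by
    intro a b c ha hb hc
    rw [hcyc a b (-c), hneg₁ c a b hc ha hb, ← hcyc a b c]
  have hdiv₁ : ∀ a b c d : F, a ≠ 0 → b ≠ 0 → c ≠ 0 → d ≠ 0 →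
      t (a / b) c d = t a c d - t b c d := by
    intro a b c d ha hb hc hd
    have h := hmul₁ (a / b) b c d (div_ne_zero ha hb) hb hc hd
    rw [div_mul_cancel₀ a hb] at h
    exact eq_sub_of_add_eq h.symm
  have hdiv₂ : ∀ a b c d : F, a ≠ 0 → b ≠ 0 → c ≠ 0 → d ≠ 0 →
      t a (b / c) d = t a b d - t a c d := by
    intro a b c d ha hb hc hd
    have h := hmul₂ a (b / c) c d ha (div_ne_zero hb hc) hc hd
    rw [div_mul_cancel₀ b hc] at h
    exact eq_sub_of_add_eq h.symm
  have hdiv₃ : ∀ a b c d : F, a ≠ 0 → b ≠ 0 → c ≠ 0 → d ≠ 0 →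
      t a b (c / d) = t a b c - t a b d := by
    intro a b c d ha hb hc hd
    have h := hmul₃ a b (c / d) d ha hb (div_ne_zero hc hd) hd
    rw [div_mul_cancel₀ c hd] at h
    exact eq_sub_of_add_eq h.symm
  have hnr : -(y - x) ≠ 0 := neg_ne_zero.mpr hr
  have hnq : -((1 : F) - y) ≠ 0 := neg_ne_zero.mpr hq
  have hnp : -((1 : F) - x) ≠ 0 := neg_ne_zero.mpr hp
  have hqp : (1 - y) / (1 - x) ≠ 0 := div_ne_zero hq hp
  have hvu : y / x ≠ 0 := div_ne_zero hy0 hx0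
  rw [show 1 - (1 - y) / (1 - x) = (y - x) / (1 - x) by field_simp; ring]
  rw [show 1 - y / x = -(y - x) / x by field_simp; ring]
  rw [show 1 - y⁻¹ = -(1 - y) / y by field_simp; ring]
  rw [show 1 - x⁻¹ = -(1 - x) / x by field_simp; ring]
  -- expand term 1
  rw [hdiv₁ (y - x) (1 - x) _ _ hr hp hqp hvu,
      hdiv₂ (y - x) (1 - y) (1 - x) _ hr hq hp hvu,
      hdiv₂ (1 - x) (1 - y) (1 - x) _ hp hq hp hvu,
      hdiv₃ (y - x) (1 - y) y x hr hq hy0 hx0,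
      hdiv₃ (y - x) (1 - x) y x hr hp hy0 hx0,
      hdiv₃ (1 - x) (1 - y) y x hp hq hy0 hx0,
      haa (1 - x)]
  -- expand term 2
  rw [hdiv₁ (-(y - x)) x _ _ hnr hx0 hvu hqp,
      hneg₁ (y - x) _ _ hr hvu hqp,
      hdiv₂ (y - x) y x _ hr hy0 hx0 hqp,
      hdiv₂ x y x _ hx0 hy0 hx0 hqp,
      hdiv₃ (y - x) y (1 - y) (1 - x) hr hy0 hq hp,
      hdiv₃ (y - x) x (1 - y) (1 - x) hr hx0 hq hp,
      hdiv₃ x y (1 - y) (1 - x) hx0 hy0 hq hp,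
      haa x]
  -- expand terms 3 and 4
  rw [hdiv₃ (1 - x) x (-(1 - y)) y hp hx0 hnq hy0,
      hneg₃ (1 - x) x (1 - y) hp hx0 hq,
      hdiv₃ (1 - y) y (-(1 - x)) x hq hy0 hnp hx0,
      hneg₃ (1 - y) y (1 - x) hq hy0 hp]
  -- alternation canonicalization
  rw [halt₂ (y - x) y (1 - y), halt₂ (y - x) y (1 - x),
      halt₂ (y - x) x (1 - y), halt₂ (y - x) x (1 - x),
      hcyc (1 - y) y (1 - x), halt₂ (1 - x) x (1 - y),
      hcyc x y (1 - y), halt₂ (1 - y) y x, hcyc x y (1 - x)]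
  abel
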